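/- Let U be a finite-dimensional Banach space with d = dim(U) and let V be a Banach space which is strongly weakly compactly generated by the weakly compact set G ⊆ V. Then the projective tensor product U ⊗π V is strongly weakly compactly generated by the weakly compact set G' := Σ_{i=1}^d B_U ⊗ G, the Minkowski sum of d copies of the set {u ⊗ g : u ∈ B_U, g ∈ G}. -/

import Mathlib

open Filter Topology Pointwise MeasureTheory
open scoped ENNReal

/-- A set is weakly compact if its image in the weak space is compact. -/
def WeaklyCompact {Z : Type*} [NormedAddCommGroup Z] [NormedSpace ℝ Z] (K : Set Z) : Prop :=
  IsCompact (toWeakSpace ℝ Z '' K)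

/-- A set is relatively weakly compact if the weak closure of its image in the weak space
is compact. -/
def RelWeaklyCompact {Z : Type*} [NormedAddCommGroup Z] [NormedSpace ℝ Z] (K : Set Z) : Prop :=
  IsCompact (closure (toWeakSpace ℝ Z '' K))

/-- A set is conditionally weakly compact (weakly precompact) if every sequence in it has a
weakly Cauchy subsequence. -/
def CondWeaklyCompact {Z : Type*} [NormedAddCommGroup Z] [NormedSpace ℝ Z] (D : Set Z) : Prop :=
  ∀ u : ℕ → Z, (∀ n, u n ∈ D) → ∃ φ : ℕ → ℕ, StrictMono φ ∧
    ∀ f : Z →L[ℝ] ℝ, ∃ l : ℝ, Tendsto (fun n => f (u (φ n))) atTop (nhds l)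

/-- `Z` is strongly weakly compactly generated by the weakly compact set `G`. -/
def SWCGBy {Z : Type*} [NormedAddCommGroup Z] [NormedSpace ℝ Z] (G : Set Z) : Prop :=
  WeaklyCompact G ∧ ∀ K : Set Z, WeaklyCompact K → ∀ ε : ℝ, 0 < ε →
    ∃ n : ℕ, K ⊆ (n : ℝ) • G + Metric.closedBall (0 : Z) ε

/-- A Banach space is strongly weakly compactly generated. -/
def IsSWCG (Z : Type*) [NormedAddCommGroup Z] [NormedSpace ℝ Z] : Prop :=
  ∃ G : Set Z, SWCGBy G

/-- A Banach space is strongly conditionally weakly compactly generated. -/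
def IsSCWCG (Z : Type*) [NormedAddCommGroup Z] [NormedSpace ℝ Z] : Prop :=
  ∃ G : Set Z, CondWeaklyCompact G ∧ ∀ C : Set Z, CondWeaklyCompact C → ∀ ε : ℝ, 0 < ε →
    ∃ n : ℕ, C ⊆ (n : ℝ) • G + Metric.closedBall (0 : Z) ε

/-- A Banach space is weakly sequentially complete if every weakly Cauchy sequence is weakly
convergent. -/
def WeaklySeqComplete (Z : Type*) [NormedAddCommGroup Z] [NormedSpace ℝ Z] : Prop :=
  ∀ u : ℕ → Z, (∀ f : Z →L[ℝ] ℝ, ∃ l : ℝ, Tendsto (fun n => f (u n)) atTop (nhds l)) →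
    ∃ z : Z, ∀ f : Z →L[ℝ] ℝ, Tendsto (fun n => f (u n)) atTop (nhds (f z))

/-- A Banach space has the Schur property if weakly convergent sequences are norm convergent. -/
def SchurProperty (Z : Type*) [NormedAddCommGroup Z] [NormedSpace ℝ Z] : Prop :=
  ∀ u : ℕ → Z, ∀ z : Z,
    (∀ f : Z →L[ℝ] ℝ, Tendsto (fun n => f (u n)) atTop (nhds (f z))) →
      Tendsto u atTop (nhds z)

/-- `Z`, together with the continuous bilinear map `t`, is (a realization of) the projective
tensor product `X ⊗π Y`: the elementary tensors span a dense subspace, on that subspace the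
norm is the projective norm, and every bilinear functional of norm at most one induces a
functional on `Z` of norm at most one. -/
def IsProjTensorProduct {X Y Z : Type*} [NormedAddCommGroup X] [NormedSpace ℝ X]
    [NormedAddCommGroup Y] [NormedSpace ℝ Y] [NormedAddCommGroup Z] [NormedSpace ℝ Z]
    (t : X →L[ℝ] Y →L[ℝ] Z) : Prop :=
  Dense ((Submodule.span ℝ {z : Z | ∃ x y, z = t x y} : Submodule ℝ Z) : Set Z) ∧
  (∀ z : Z, z ∈ Submodule.span ℝ {z : Z | ∃ x y, z = t x y} →
    ‖z‖ = sInf {r : ℝ | ∃ (n : ℕ) (x : Fin n → X) (y : Fin n → Y),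
      z = ∑ i, t (x i) (y i) ∧ r = ∑ i, ‖x i‖ * ‖y i‖}) ∧
  (∀ B : X →L[ℝ] Y →L[ℝ] ℝ, ‖B‖ ≤ 1 →
    ∃ φ : Z →L[ℝ] ℝ, ‖φ‖ ≤ 1 ∧ ∀ x y, φ (t x y) = B x y)

/-- An unconditional Schauder decomposition of `X` indexed by `I`, given by its family of
projections `proj C` for `C ⊆ I`: each `proj C x` is the unconditional sum of the coordinate
projections `proj {i} x`, `i ∈ C`, the coordinate projections are pairwise disjoint idempotents
and they sum to the identity. -/
structure SchauderDecomp (I : Type*) (X : Type*) [NormedAddCommGroup X]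
    [NormedSpace ℝ X] where
  proj : Set I → (X →L[ℝ] X)
  hasSum_proj : ∀ (C : Set I) (x : X), HasSum (fun i : C => proj {(i : I)} x) (proj C x)
  proj_univ : ∀ x, proj Set.univ x = x
  proj_idem : ∀ i : I, ∀ x, proj {i} (proj {i} x) = proj {i} x
  proj_disjoint : ∀ i j : I, i ≠ j → ∀ x, proj {i} (proj {j} x) = 0

/-- The decomposition is finite dimensional if each coordinate subspace is finite dimensional. -/
def SchauderDecomp.FinDim {I X : Type*} [NormedAddCommGroup X] [NormedSpace ℝ X]
    (d : SchauderDecomp I X) : Prop :=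
  ∀ i : I, FiniteDimensional ℝ (LinearMap.range ((d.proj {i}) : X →ₗ[ℝ] X))

/-- The decomposition has a disjoint lower `p`-estimate. -/
def SchauderDecomp.DisjLowerEstimate {I X : Type*} [NormedAddCommGroup X] [NormedSpace ℝ X]
    (d : SchauderDecomp I X) (p : ℝ) : Prop :=
  ∃ c : ℝ, 0 < c ∧ ∀ (r : ℕ) (C : Fin r → Set I), (∀ k, (C k).Finite) →
    (Pairwise fun k l => Disjoint (C k) (C l)) →
    ∀ x : X, (∑ k, ‖d.proj (C k) x‖ ^ p) ^ (1 / p) ≤ c * ‖x‖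


section SWCGAux

variable {Y W : Type*} [NormedAddCommGroup Y] [NormedSpace ℝ Y]
    [NormedAddCommGroup W] [NormedSpace ℝ W]

private lemma swcg_wc_image (T : Y →L[ℝ] W) {K : Set Y}
    (h : WeaklyCompact K) : WeaklyCompact (T '' K) := by
  have he : toWeakSpace ℝ W '' (T '' K) = WeakSpace.map T '' (toWeakSpace ℝ Y '' K) := by
    rw [Set.image_image, Set.image_image]; rfl
  rw [WeaklyCompact, he]
  exact h.image (WeakSpace.map T).continuous

private lemma swcg_wc_union {ι : Type*} [Finite ι]
    {K : ι → Set W} (h : ∀ i, WeaklyCompact (K i)) : WeaklyCompact (⋃ i, K i) := by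
  rw [WeaklyCompact, Set.image_iUnion]
  exact isCompact_iUnion h

end SWCGAux

set_option maxHeartbeats 1000000 in
set_option synthInstance.maxHeartbeats 1000000 in
/-- if `U` is finite dimensional with `d = dim U` and `V` is SWCG by `G`, then
`U ⊗π V` is SWCG by `G' = Σ_{i=1}^d B_U ⊗ G`. -/
theorem statement7 {U V Z : Type*}
    [NormedAddCommGroup U] [NormedSpace ℝ U] [FiniteDimensional ℝ U]
    [NormedAddCommGroup V] [NormedSpace ℝ V] [CompleteSpace V]
    [NormedAddCommGroup Z] [NormedSpace ℝ Z] [CompleteSpace Z]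
    (t : U →L[ℝ] V →L[ℝ] Z) (ht : IsProjTensorProduct t)
    (G : Set V) (hG : SWCGBy G) :
    SWCGBy {z : Z | ∃ (u : Fin (Module.finrank ℝ U) → U) (v : Fin (Module.finrank ℝ U) → V),
      (∀ i, ‖u i‖ ≤ 1) ∧ (∀ i, v i ∈ G) ∧ z = ∑ i, t (u i) (v i)} := by
  classical
  obtain ⟨hdense, -, hfunc⟩ := ht
  haveI := NormedSpace.toIsBoundedSMul (𝕜 := ℝ) (E := U →L[ℝ] V →L[ℝ] ℝ)
  set d := Module.finrank ℝ U with hd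
  let b : Module.Basis (Fin d) ℝ U := Module.finBasis ℝ U
  have hbne : ∀ i, ‖b i‖ ≠ 0 := fun i => norm_ne_zero_iff.2 (b.ne_zero i)
  let e : Fin d → U := fun i => ‖b i‖⁻¹ • b i
  let c : Fin d → (U →L[ℝ] ℝ) := fun i =>
    ‖b i‖ • (LinearMap.toContinuousLinearMap (b.coord i))
  have he1 : ∀ i, ‖e i‖ ≤ 1 := by
    intro i
    simp only [e, norm_smul, norm_inv, norm_norm]
    rw [inv_mul_cancel₀ (hbne i)]
  have hcx : ∀ i x, c i x = ‖b i‖ * b.coord i x := by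
    intro i x; simp [c]
  have hce : ∀ i j, c i (e j) = if i = j then 1 else 0 := by
    intro i j
    rw [hcx]
    simp only [e, _root_.map_smul, Module.Basis.coord_apply, Module.Basis.repr_self, smul_eq_mul]
    rcases eq_or_ne i j with h | h
    · subst h
      simp [Finsupp.single_apply, mul_comm, inv_mul_cancel₀ (hbne i), hbne i]
    · simp [Finsupp.single_apply, Ne.symm h, h]
  have hrepr : ∀ x : U, ∑ i, c i x • e i = x := by
    intro x
    have := b.sum_repr x
    calc ∑ i, c i x • e i = ∑ i, b.repr x i • b i := by
          refine Finset.sum_congr rfl fun i _ => ?_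
          rw [hcx]
          simp only [e, smul_smul, Module.Basis.coord_apply, smul_eq_mul]
          rw [show ‖b i‖ * b.repr x i * ‖b i‖⁻¹ = (‖b i‖ * ‖b i‖⁻¹) * b.repr x i by ring,
            mul_inv_cancel₀ (hbne i), one_mul]
      _ = x := this
  -- the isomorphism Φ : V^d → Z
  let Φ : (Fin d → V) →L[ℝ] Z :=
    ∑ i, (t (e i)).comp (ContinuousLinearMap.proj i)
  have hΦ : ∀ v : Fin d → V, Φ v = ∑ i, t (e i) (v i) := by
    intro v
    simp [Φ, ContinuousLinearMap.sum_apply]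
  -- slice functionals
  have hfun : ∀ (i : Fin d) (f : V →L[ℝ] ℝ), ∃ φ : Z →L[ℝ] ℝ,
      ‖φ‖ ≤ ‖c i‖ * ‖f‖ ∧ ∀ x y, φ (t x y) = c i x * f y := by
    intro i f
    rcases eq_or_ne f 0 with hf | hf
    · exact ⟨0, by simp [hf], by simp [hf]⟩
    have hci : c i ≠ 0 := by
      intro h
      have := hce i i
      simp [h] at this
    have hN : 0 < ‖c i‖ * ‖f‖ :=
      mul_pos (norm_pos_iff.2 hci) (norm_pos_iff.2 hf)
    set N := ‖c i‖ * ‖f‖ with hNdef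
    have hBnorm : ‖N⁻¹ • (c i).smulRight f‖ ≤ 1 := by
      refine ContinuousLinearMap.opNorm_le_bound _ zero_le_one fun x => ?_
      rw [ContinuousLinearMap.smul_apply, ContinuousLinearMap.smulRight_apply]
      calc ‖N⁻¹ • (c i x • f)‖ = N⁻¹ * (‖c i x‖ * ‖f‖) := by
            rw [norm_smul (N⁻¹) ((c i) x • f), norm_smul ((c i) x) f,
              Real.norm_eq_abs, Real.norm_eq_abs, abs_of_pos (inv_pos.2 hN)]
        _ ≤ N⁻¹ * (‖c i‖ * ‖x‖ * ‖f‖) := by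
            have h1 : ‖c i x‖ ≤ ‖c i‖ * ‖x‖ := (c i).le_opNorm x
            have h2 : ‖c i x‖ * ‖f‖ ≤ ‖c i‖ * ‖x‖ * ‖f‖ :=
              mul_le_mul_of_nonneg_right h1 (norm_nonneg f)
            exact mul_le_mul_of_nonneg_left h2 (inv_pos.2 hN).le
        _ = N⁻¹ * (N * ‖x‖) := by rw [hNdef]; ring
        _ = 1 * ‖x‖ := by rw [← mul_assoc, inv_mul_cancel₀ hN.ne']
    obtain ⟨φ₀, hφ₀n, hφ₀⟩ := hfunc _ hBnorm
    refine ⟨N • φ₀, ?_, ?_⟩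
    · rw [norm_smul N φ₀, Real.norm_eq_abs, abs_of_pos hN]
      calc N * ‖φ₀‖ ≤ N * 1 := by
            exact mul_le_mul_of_nonneg_left hφ₀n hN.le
        _ = N := mul_one N
    · intro x y
      have := hφ₀ x y
      simp only [ContinuousLinearMap.smul_apply, this, ContinuousLinearMap.smulRight_apply,
        smul_eq_mul]
      field_simp
  -- lower bound
  have hlow : ∀ (v : Fin d → V) (i : Fin d), ‖v i‖ ≤ ‖c i‖ * ‖Φ v‖ := by
    intro v i
    refine NormedSpace.norm_le_dual_bound ℝ (v i) (mul_nonneg (norm_nonneg _) (norm_nonneg _)) fun f => ?_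
    obtain ⟨φ, hφn, hφ⟩ := hfun i f
    have hkey : φ (Φ v) = f (v i) := by
      rw [hΦ, map_sum]
      have : ∀ j, φ (t (e j) (v j)) = (if i = j then 1 else 0) * f (v j) := by
        intro j; rw [hφ, hce]
      simp only [this, ite_mul, one_mul, zero_mul]
      simp
    calc ‖f (v i)‖ = ‖φ (Φ v)‖ := by rw [hkey]
      _ ≤ ‖φ‖ * ‖Φ v‖ := φ.le_opNorm _
      _ ≤ (‖c i‖ * ‖f‖) * ‖Φ v‖ :=
          mul_le_mul_of_nonneg_right hφn (norm_nonneg _)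
      _ = ‖c i‖ * ‖Φ v‖ * ‖f‖ := by ring
  set C : ℝ := 1 + ∑ i, ‖c i‖ with hC
  have hC1 : 1 ≤ C := le_add_of_nonneg_right (Finset.sum_nonneg fun i _ => norm_nonneg _)
  have hCi : ∀ i, ‖c i‖ ≤ C := by
    intro i
    have : ‖c i‖ ≤ ∑ j, ‖c j‖ :=
      Finset.single_le_sum (fun j _ => norm_nonneg (c j)) (Finset.mem_univ i)
    linarith
  have hbound : ∀ v : Fin d → V, ‖v‖ ≤ C * ‖Φ v‖ := by
    intro v
    rw [pi_norm_le_iff_of_nonneg (by positivity)]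
    intro i
    calc ‖v i‖ ≤ ‖c i‖ * ‖Φ v‖ := hlow v i
      _ ≤ C * ‖Φ v‖ := mul_le_mul_of_nonneg_right (hCi i) (norm_nonneg _)
  have hanti : AntilipschitzWith (⟨C, by linarith⟩ : NNReal) Φ :=
    Φ.antilipschitz_of_bound fun v => hbound v
  have hker : LinearMap.ker Φ = ⊥ := LinearMap.ker_eq_bot.2 (by exact hanti.injective)
  -- elementary tensors are in the range
  have htens : ∀ x y, t x y = Φ (fun i => c i x • y) := by
    intro x y
    rw [hΦ]
    conv_lhs => rw [← hrepr x]
    rw [map_sum, ContinuousLinearMap.sum_apply]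
    refine Finset.sum_congr rfl fun i _ => ?_
    simp [_root_.map_smul]
  have hrange : LinearMap.range (Φ : (Fin d → V) →ₗ[ℝ] Z) = ⊤ := by
    have hclosed : IsClosed (Set.range Φ) :=
      hanti.isClosed_range Φ.uniformContinuous
    have hsub' : Submodule.span ℝ {z : Z | ∃ x y, z = t x y} ≤ LinearMap.range (Φ : (Fin d → V) →ₗ[ℝ] Z) :=
      Submodule.span_le.2 (by
        rintro z ⟨x, y, rfl⟩
        exact ⟨fun i => c i x • y, (htens x y).symm⟩)
    have hsub : ((Submodule.span ℝ {z : Z | ∃ x y, z = t x y} : Submodule ℝ Z) : Set Z)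
        ⊆ Set.range Φ := fun z hz => by
      obtain ⟨v, hv⟩ := hsub' hz
      exact ⟨v, hv⟩
    have : Dense (Set.range Φ) := hdense.mono hsub
    have := this.closure_eq
    rw [hclosed.closure_eq] at this
    exact LinearMap.range_eq_top.2 fun z => by
      have : z ∈ Set.range Φ := this ▸ Set.mem_univ z
      exact this
  let E := ContinuousLinearEquiv.ofBijective Φ hker hrange
  have hE : ∀ v, E v = Φ v := fun v => rfl
  have hEsymm : ∀ z : Z, ∑ i, t (e i) (E.symm z i) = z := by
    intro z
    rw [← hΦ, ← hE, E.apply_symm_apply]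
  -- the slice maps
  let T : Fin d → (Z →L[ℝ] V) := fun i =>
    (ContinuousLinearMap.proj i).comp (E.symm : Z →L[ℝ] (Fin d → V))
  have hT : ∀ i z, T i z = E.symm z i := fun i z => rfl
  constructor
  · -- weak compactness of the generating set
    let wG := toWeakSpace ℝ V '' G
    let CC : Set ((Fin d → U) × (Fin d → WeakSpace ℝ V)) :=
      (Set.univ.pi fun _ => Metric.closedBall (0 : U) 1) ×ˢ (Set.univ.pi fun _ => wG)
    have hCC : IsCompact CC :=
      (isCompact_univ_pi fun _ => isCompact_closedBall 0 1).prod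
        (isCompact_univ_pi fun _ => hG.1)
    let F : (Fin d → U) × (Fin d → WeakSpace ℝ V) → WeakSpace ℝ Z :=
      fun p => toWeakSpace ℝ Z (∑ i, t (p.1 i) ((toWeakSpace ℝ V).symm (p.2 i)))
    have hFc : Continuous F := by
      apply WeakBilin.continuous_of_continuous_eval
      intro φ
      show Continuous fun p : (Fin d → U) × (Fin d → WeakSpace ℝ V) =>
        φ (∑ i, t (p.1 i) ((toWeakSpace ℝ V).symm (p.2 i)))
      have key : ∀ p : (Fin d → U) × (Fin d → WeakSpace ℝ V),
          φ (∑ i, t (p.1 i) ((toWeakSpace ℝ V).symm (p.2 i))) =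
          ∑ i, ∑ j, c j (p.1 i) *
            (φ.comp (t (e j))) ((toWeakSpace ℝ V).symm (p.2 i)) := by
        intro p
        rw [map_sum]
        refine Finset.sum_congr rfl fun i _ => ?_
        conv_lhs => rw [← hrepr (p.1 i)]
        rw [map_sum, ContinuousLinearMap.sum_apply, map_sum]
        refine Finset.sum_congr rfl fun j _ => ?_
        rw [_root_.map_smul, ContinuousLinearMap.smul_apply, _root_.map_smul, smul_eq_mul]
        rfl
      rw [funext key]
      refine continuous_finset_sum _ fun i _ => continuous_finset_sum _ fun j _ => ?_
      refine Continuous.mul ?_ ?_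
      · exact (c j).continuous.comp ((continuous_apply i).comp continuous_fst)
      · have hcev : Continuous fun w : WeakSpace ℝ V =>
            (φ.comp (t (e j))) ((toWeakSpace ℝ V).symm w) :=
          WeakBilin.eval_continuous _ (φ.comp (t (e j)))
        exact hcev.comp ((continuous_apply i).comp continuous_snd)
    have himg : toWeakSpace ℝ Z ''
        {z : Z | ∃ (u : Fin d → U) (v : Fin d → V),
          (∀ i, ‖u i‖ ≤ 1) ∧ (∀ i, v i ∈ G) ∧ z = ∑ i, t (u i) (v i)} = F '' CC := by
      apply Set.Subset.antisymm
      · rintro _ ⟨z, ⟨u, v, hu, hv, rfl⟩, rfl⟩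
        refine ⟨(u, fun i => toWeakSpace ℝ V (v i)), ⟨?_, ?_⟩, ?_⟩
        · exact fun i _ => mem_closedBall_zero_iff.2 (hu i)
        · exact fun i _ => ⟨v i, hv i, rfl⟩
        · show toWeakSpace ℝ Z (∑ i, t (u i) ((toWeakSpace ℝ V).symm (toWeakSpace ℝ V (v i))))
            = toWeakSpace ℝ Z (∑ i, t (u i) (v i))
          simp only [(toWeakSpace ℝ V).symm_apply_apply]
      · rintro _ ⟨⟨u, w⟩, ⟨hu, hw⟩, rfl⟩
        have hw' : ∀ i, ∃ v : V, v ∈ G ∧ toWeakSpace ℝ V v = w i := by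
          intro i
          obtain ⟨v, hv, hvw⟩ := hw i (Set.mem_univ i)
          exact ⟨v, hv, hvw⟩
        choose v hv hvw using hw'
        refine ⟨∑ i, t (u i) (v i), ⟨u, v, ?_, hv, rfl⟩, ?_⟩
        · exact fun i => mem_closedBall_zero_iff.1 (hu i (Set.mem_univ i))
        · show toWeakSpace ℝ Z (∑ i, t (u i) (v i))
            = toWeakSpace ℝ Z (∑ i, t (u i) ((toWeakSpace ℝ V).symm (w i)))
          refine congrArg _ (Finset.sum_congr rfl fun i _ => ?_)
          rw [← hvw i, (toWeakSpace ℝ V).symm_apply_apply]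
    show IsCompact (toWeakSpace ℝ Z '' _)
    rw [himg]
    exact hCC.image hFc
  · -- the generation property
    intro K hK ε hε
    have hK' : WeaklyCompact (⋃ i, (T i) '' K) :=
      swcg_wc_union fun i => swcg_wc_image (T i) hK
    set A : ℝ := (d : ℝ) * (‖t‖ + 1) with hA
    have hA0 : 0 ≤ A := by positivity
    set ε' : ℝ := ε / (A + 1) with hε'def
    have hε' : 0 < ε' := by positivity
    obtain ⟨n, hn⟩ := hG.2 _ hK' ε' hε'
    refine ⟨n, fun z hz => ?_⟩
    have hmem : ∀ i : Fin d, ∃ g, g ∈ G ∧ ∃ w, ‖w‖ ≤ ε' ∧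
        E.symm z i = (n : ℝ) • g + w := by
      intro i
      have h1 : T i z ∈ ⋃ j, (T j) '' K := Set.mem_iUnion.2 ⟨i, z, hz, rfl⟩
      obtain ⟨a, ha, w, hwball, haw⟩ := Set.mem_add.1 (hn h1)
      obtain ⟨g, hgG, rfl⟩ := ha
      exact ⟨g, hgG, w, by simpa [dist_eq_norm] using hwball, by rw [← hT i z, ← haw]⟩
    choose g hg w hw hdec using hmem
    have hzdec : z = (n : ℝ) • (∑ i, t (e i) (g i)) + ∑ i, t (e i) (w i) := by
      conv_lhs => rw [← hEsymm z]
      rw [Finset.smul_sum, ← Finset.sum_add_distrib]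
      refine Finset.sum_congr rfl fun i _ => ?_
      rw [hdec i, map_add, _root_.map_smul]
    rw [hzdec]
    refine Set.add_mem_add (Set.smul_mem_smul_set ⟨e, g, he1, hg, rfl⟩) ?_
    rw [Metric.mem_closedBall, dist_zero_right]
    have hbnd : ∀ i : Fin d, ‖t (e i) (w i)‖ ≤ (‖t‖ + 1) * ε' := by
      intro i
      have h1 := t.le_opNorm₂ (e i) (w i)
      have h2 := he1 i
      have h3 := hw i
      have h4 : (0:ℝ) ≤ ‖t‖ := norm_nonneg t
      have h5 : (0:ℝ) ≤ ‖e i‖ := norm_nonneg _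
      have h6 : (0:ℝ) ≤ ‖w i‖ := norm_nonneg _
      have h7 : ‖t‖ * ‖e i‖ ≤ ‖t‖ := by nlinarith
      have h8 : ‖t‖ * ‖e i‖ * ‖w i‖ ≤ ‖t‖ * ε' :=
        mul_le_mul h7 h3 h6 h4
      nlinarith [hε'.le]
    calc ‖∑ i, t (e i) (w i)‖ ≤ ∑ i, ‖t (e i) (w i)‖ := norm_sum_le _ _
      _ ≤ ∑ _i : Fin d, (‖t‖ + 1) * ε' := Finset.sum_le_sum fun i _ => hbnd i
      _ = (d : ℝ) * ((‖t‖ + 1) * ε') := by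
          rw [Finset.sum_const, Finset.card_univ, Fintype.card_fin, nsmul_eq_mul]
      _ = A * ε' := by rw [hA]; ring
      _ ≤ ε := by
          rw [hε'def, ← mul_div_assoc, div_le_iff₀ (by linarith : (0:ℝ) < A + 1)]
          nlinarith [hε.le, hA0]
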